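/- If γ_c > 0 satisfies γ_c = ∑_{n=1}^N 1/(K/(1+γ_c) + Kη/λ_n) and γ_u > 0 satisfies γ_u = N/(K/(1+γ_u) + Kη), where λ_n > 0 with ∑ λ_n = N and K, η > 0, then γ_c ≤ γ_u. -/
import Mathlib

/-- Tangent-line trick: g(λ)=1/(a+b/λ) is concave, bounded by its tangent at λ=1. -/
lemma tangent (a b l : ℝ) (ha : 0 < a) (hb : 0 < b) (hl : 0 < l) :
    1 / (a + b / l) ≤ 1 / (a + b) + b * (l - 1) / (a + b) ^ 2 := by
  have hab : 0 < a + b := by linarith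
  have hd : 0 < a + b / l := by positivity
  rw [← sub_nonneg]
  have h1 : 1 / (a + b) + b * (l - 1) / (a + b) ^ 2 - 1 / (a + b / l)
      = a * b * (l - 1) ^ 2 / ((a * l + b) * (a + b) ^ 2) := by
    have h2 : a + b / l = (a * l + b) / l := by field_simp
    rw [h2]
    have h3 : 0 < a * l + b := by positivity
    field_simp
    ring
  rw [h1]
  positivity

theorem stmt_3 (N : ℕ) (hN : 0 < N) (lam : Fin N → ℝ) (hlam : ∀ n, 0 < lam n)
    (hsum : ∑ n, lam n = (N : ℝ)) (K η : ℝ) (hK : 0 < K) (hη : 0 < η)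
    (γc γu : ℝ) (hγc : 0 < γc) (hγu : 0 < γu)
    (hc : γc = ∑ n, 1 / (K / (1 + γc) + K * η / lam n))
    (hu : γu = (N : ℝ) / (K / (1 + γu) + K * η)) :
    γc ≤ γu := by
  set a := K / (1 + γc) with ha_def
  have ha : 0 < a := by positivity
  have hb : 0 < K * η := by positivity
  have hab : 0 < a + K * η := by linarith
  -- Jensen / tangent line: γc ≤ N/(a + Kη)
  have hstep : γc ≤ (N : ℝ) / (a + K * η) := by
    rw [hc]
    calc ∑ n, 1 / (a + K * η / lam n)
        ≤ ∑ n, (1 / (a + K * η) + K * η * (lam n - 1) / (a + K * η) ^ 2) :=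
          Finset.sum_le_sum fun n _ => tangent a (K * η) (lam n) ha hb (hlam n)
      _ = (N : ℝ) / (a + K * η) := by
          rw [Finset.sum_add_distrib, Finset.sum_const, Finset.card_univ, Fintype.card_fin]
          have : ∑ n, K * η * (lam n - 1) / (a + K * η) ^ 2
              = (∑ n, (lam n - 1)) * (K * η / (a + K * η) ^ 2) := by
            rw [Finset.sum_mul]
            congr 1; ext n; ring
          rw [this]
          have : ∑ n : Fin N, (lam n - 1) = 0 := by
            simp [Finset.sum_sub_distrib, hsum]
          rw [this]
          simp [div_eq_mul_inv]
  -- quadratic comparison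
  have h1c : 0 < 1 + γc := by linarith
  have h1u : 0 < 1 + γu := by linarith
  have hqc : K * η * γc ^ 2 + (K + K * η - N) * γc - N ≤ 0 := by
    have h2 := (le_div_iff₀ hab).mp hstep
    have h3 : a * (1 + γc) = K := by rw [ha_def]; field_simp
    nlinarith [mul_le_mul_of_nonneg_right h2 h1c.le, h3]
  have hqu : K * η * γu ^ 2 + (K + K * η - N) * γu - N = 0 := by
    have hd : 0 < K / (1 + γu) + K * η := by positivity
    field_simp at hu
    nlinarith [hu]
  nlinarith [mul_pos hγc hγu, mul_pos hb (mul_pos hγc hγu), sq_nonneg (γc - γu),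
    mul_pos hb hγu, mul_pos hb hγc, (by exact_mod_cast hN : (0:ℝ) < N)]
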